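/- In type Bₙ (n ≥ 3), let ω₁^∨ be the first fundamental coweight and let μ be a dominant coweight in the coroot lattice translate of ω₁^∨ (i.e. μ - ω₁^∨ lies in the coroot lattice) with ω₁^∨ ≤ μ. Then μ is NOT ≥ ω₁^∨ + ω₂^∨ in the dominance order if and only if μ ≤ ω_{ñ}^∨, where ñ is the largest odd integer with ñ ≤ n. -/
import Mathlib


/-- The simple coroots of type `Bₙ` in `ℤⁿ`: `αᵢ^∨ = eᵢ - eᵢ₊₁` for `i < n` and
`αₙ^∨ = 2eₙ` (indices `i : Fin n` are 0-based). -/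
def Bcoroot (n : ℕ) (i : Fin n) : Fin n → ℤ :=
  fun j => if i.val = n - 1 then (if j = i then 2 else 0)
    else if j.val = i.val then 1 else if j.val = i.val + 1 then -1 else 0

/-- The fundamental coweight `ωₘ^∨ = e₁ + ⋯ + eₘ` of type `Bₙ`. -/
def Bomega (n m : ℕ) : Fin n → ℤ := fun j => if j.val < m then 1 else 0

/-- Dominance order: `μ - λ` is a nonnegative integer combination of simple coroots. -/
def BdomLE (n : ℕ) (lam mu : Fin n → ℤ) : Prop :=
  ∃ c : Fin n → ℕ, mu - lam = ∑ i, (c i : ℤ) • Bcoroot n i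

/-- Dominant coweights of type `Bₙ`: weakly decreasing with nonnegative entries. -/
def Bdominant (n : ℕ) (mu : Fin n → ℤ) : Prop :=
  Antitone mu ∧ ∀ j, 0 ≤ mu j

namespace S6

/-- partial sums -/
def P (n : ℕ) (v : Fin n → ℤ) (k : ℕ) : ℤ := ∑ j, if j.val < k then v j else 0

lemma P_zero (n : ℕ) (v : Fin n → ℤ) : P n v 0 = 0 := by simp [P]

lemma P_succ (n : ℕ) (v : Fin n → ℤ) {k : ℕ} (hk : k < n) :
    P n v (k + 1) = P n v k + v ⟨k, hk⟩ := by
  unfold P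
  have h : ∀ j : Fin n, (if j.val < k + 1 then v j else 0)
      = (if j.val < k then v j else 0) + (if j = ⟨k, hk⟩ then v j else 0) := by
    intro j
    rcases lt_trichotomy j.val k with h | h | h
    · simp [h, Nat.lt_succ_of_lt h, show j ≠ ⟨k, hk⟩ by simp [Fin.ext_iff]; omega]
    · simp [h, show j = ⟨k, hk⟩ from Fin.ext h]
    · simp [show ¬ j.val < k + 1 by omega, show ¬ j.val < k by omega,
        show j ≠ ⟨k, hk⟩ by simp [Fin.ext_iff]; omega]
  rw [Finset.sum_congr rfl (fun j _ => h j), Finset.sum_add_distrib]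
  simp

lemma P_top (n : ℕ) (v : Fin n → ℤ) : P n v n = ∑ j, v j := by
  unfold P
  exact Finset.sum_congr rfl fun j _ => by simp [j.isLt]

lemma P_sub (n : ℕ) (a b : Fin n → ℤ) (k : ℕ) : P n (a - b) k = P n a k - P n b k := by
  unfold P
  rw [← Finset.sum_sub_distrib]
  exact Finset.sum_congr rfl fun j _ => by split <;> simp

lemma P_add (n : ℕ) (a b : Fin n → ℤ) (k : ℕ) : P n (a + b) k = P n a k + P n b k := by
  unfold P
  rw [← Finset.sum_add_distrib]
  exact Finset.sum_congr rfl fun j _ => by split <;> simp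

lemma P_omega (n m : ℕ) : ∀ k, k ≤ n → P n (Bomega n m) k = min k m := by
  intro k
  induction k with
  | zero => simp [P_zero]
  | succ k ih =>
    intro hk
    rw [P_succ n _ (by omega), ih (by omega)]
    simp only [Bomega]
    split <;> omega

lemma P_mono (n : ℕ) (v : Fin n → ℤ) (hv : ∀ j, 0 ≤ v j) :
    ∀ k l, k ≤ l → l ≤ n → P n v k ≤ P n v l := by
  intro k l
  induction l with
  | zero => intro h _; rw [Nat.le_zero.mp h]
  | succ l ih =>
    intro hkl hln
    rcases Nat.eq_or_lt_of_le hkl with rfl | h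
    · exact le_refl _
    · calc P n v k ≤ P n v l := ih (by omega) (by omega)
        _ ≤ P n v (l + 1) := by rw [P_succ n v (by omega)]; have := hv ⟨l, by omega⟩; omega

lemma P_ub (n : ℕ) (v : Fin n → ℤ) (hv : ∀ j, v j ≤ 1) :
    ∀ k, k ≤ n → P n v k ≤ k := by
  intro k
  induction k with
  | zero => intro _; simp [P_zero]
  | succ k ih =>
    intro hk
    rw [P_succ n v (by omega)]
    have := hv ⟨k, by omega⟩
    have := ih (by omega)
    push_cast
    omega

lemma P_const (n : ℕ) (v : Fin n → ℤ) (hz : ∀ j : Fin n, 1 ≤ j.val → v j = 0) :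
    ∀ k, 1 ≤ k → k ≤ n → P n v k = P n v 1 := by
  intro k
  induction k with
  | zero => omega
  | succ k ih =>
    intro _ hk
    rcases Nat.eq_zero_or_pos k with rfl | h
    · rfl
    · rw [P_succ n v (by omega), hz ⟨k, by omega⟩ (by exact h), ih (by omega) (by omega),
        add_zero]

lemma sum_coroot_apply (n : ℕ) (hn : 2 ≤ n) (c : Fin n → ℤ) (j : Fin n) :
    (∑ i, c i • Bcoroot n i) j
      = (if j.val = n - 1 then 2 else 1) * c j
        - (if _ : j.val = 0 then 0
            else c ⟨j.val - 1, Nat.lt_of_le_of_lt (Nat.sub_le _ _) j.isLt⟩) := by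
  simp only [Finset.sum_apply, Pi.smul_apply, smul_eq_mul]
  by_cases h0 : j.val = 0
  · rw [dif_pos h0]
    have key : ∀ i : Fin n, c i * Bcoroot n i j = if i = j then c j else 0 := by
      intro i
      unfold Bcoroot
      rcases eq_or_ne i j with rfl | hne
      · rw [if_neg (show ¬ i.val = n - 1 by omega), if_pos rfl, mul_one]; simp
      · have h2 : i.val ≠ j.val := fun h => hne (Fin.ext h)
        rw [if_neg hne]
        by_cases hl : i.val = n - 1
        · rw [if_pos hl, if_neg (show j ≠ i from hne.symm)]; ring
        · rw [if_neg hl, if_neg (show ¬ j.val = i.val by omega),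
            if_neg (show ¬ j.val = i.val + 1 by omega)]; ring
    rw [Finset.sum_congr rfl fun i _ => key i, Finset.sum_ite_eq' Finset.univ j]
    rw [if_neg (show ¬ j.val = n - 1 by omega)]
    simp
  · rw [dif_neg h0]
    set i₀ : Fin n := ⟨j.val - 1, Nat.lt_of_le_of_lt (Nat.sub_le _ _) j.isLt⟩ with hi₀
    have hval₀ : i₀.val = j.val - 1 := rfl
    have hji : j ≠ i₀ := by
      intro h; apply h0
      have := congrArg Fin.val h
      omega
    have key : ∀ i : Fin n, c i * Bcoroot n i j =
        (if i = j then (if j.val = n - 1 then 2 else 1) * c j else 0)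
        + (if i = i₀ then -c i else 0) := by
      intro i
      unfold Bcoroot
      rcases eq_or_ne i j with rfl | hne
      · rw [if_pos rfl, if_neg hji]
        by_cases hl : i.val = n - 1
        · rw [if_pos hl, if_pos rfl, if_pos hl]; simp; ring
        · rw [if_neg hl, if_pos rfl, if_neg hl]; simp
      · rw [if_neg hne]
        by_cases h2 : i = i₀
        · have hval : i.val = j.val - 1 := by rw [h2]
          rw [if_neg (show ¬ i.val = n - 1 by omega),
            if_neg (show ¬ j.val = i.val by omega),
            if_pos (show j.val = i.val + 1 by omega), if_pos h2]
          ring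
        · have hv : i.val ≠ j.val := fun h => hne (Fin.ext h)
          have hv2 : i.val ≠ j.val - 1 := fun h => h2 (Fin.ext (by rw [hval₀, h]))
          rw [if_neg h2, add_zero]
          by_cases hl : i.val = n - 1
          · rw [if_pos hl, if_neg (show j ≠ i from hne.symm)]; ring
          · rw [if_neg hl, if_neg (show ¬ j.val = i.val by omega),
              if_neg (show ¬ j.val = i.val + 1 by omega)]; ring
    rw [Finset.sum_congr rfl fun i _ => key i, Finset.sum_add_distrib,
      Finset.sum_ite_eq' Finset.univ j, Finset.sum_ite_eq' Finset.univ i₀]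
    simp only [Finset.mem_univ, if_true]
    ring

lemma sum_coroot_coords (n : ℕ) (i : Fin n) :
    ∑ j, Bcoroot n i j = if i.val = n - 1 then 2 else 0 := by
  by_cases h : i.val = n - 1
  · rw [if_pos h]
    have : ∀ j : Fin n, Bcoroot n i j = if j = i then 2 else 0 := by
      intro j; unfold Bcoroot; rw [if_pos h]
    rw [Finset.sum_congr rfl fun j _ => this j, Finset.sum_ite_eq' Finset.univ i]
    simp
  · rw [if_neg h]
    have hi1 : i.val + 1 < n := by have := i.isLt; omega
    have : ∀ j : Fin n, Bcoroot n i j =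
        (if j = ⟨i.val, i.isLt⟩ then 1 else 0) + (if j = ⟨i.val + 1, hi1⟩ then -1 else 0) := by
      intro j
      unfold Bcoroot
      rw [if_neg h]
      by_cases h1 : j.val = i.val
      · have e2 : j ≠ ⟨i.val + 1, hi1⟩ := by
          intro e; have := congrArg Fin.val e; simp at this; omega
        rw [if_pos h1, if_pos (Fin.ext h1), if_neg e2]; ring
      · have e1 : j ≠ ⟨i.val, i.isLt⟩ := by
          intro e; have := congrArg Fin.val e; simp at this; omega
        by_cases h2 : j.val = i.val + 1
        · rw [if_neg h1, if_pos h2, if_neg e1, if_pos (Fin.ext h2)]; ring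
        · have e2 : j ≠ ⟨i.val + 1, hi1⟩ := by
            intro e; have := congrArg Fin.val e; simp at this; omega
          rw [if_neg h1, if_neg h2, if_neg e1, if_neg e2]; ring
    rw [Finset.sum_congr rfl fun j _ => this j, Finset.sum_add_distrib,
      Finset.sum_ite_eq' Finset.univ, Finset.sum_ite_eq' Finset.univ]
    simp

lemma even_sum_coroot (n : ℕ) (c : Fin n → ℤ) :
    Even (∑ j, (∑ i, c i • Bcoroot n i) j) := by
  have h : ∑ j, (∑ i, c i • Bcoroot n i) j = ∑ i, c i * (∑ j, Bcoroot n i j) := by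
    simp only [Finset.sum_apply, Pi.smul_apply, smul_eq_mul]
    rw [Finset.sum_comm]
    exact Finset.sum_congr rfl fun i _ => (Finset.mul_sum _ _ _).symm
  rw [h]
  apply Finset.even_sum
  intro i _
  rw [sum_coroot_coords]
  split
  · exact ⟨c i, by ring⟩
  · simp

lemma exists_coeff (n : ℕ) (hn : 3 ≤ n) (v : Fin n → ℤ)
    (hP : ∀ k, 1 ≤ k → k ≤ n - 1 → 0 ≤ P n v k)
    (hT : 0 ≤ P n v n) (hE : Even (P n v n)) :
    ∃ c : Fin n → ℕ, v = ∑ i, (c i : ℤ) • Bcoroot n i := by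
  obtain ⟨t, ht⟩ := hE
  have ht0 : 0 ≤ t := by omega
  refine ⟨fun i => if i.val < n - 1 then (P n v (i.val + 1)).toNat else t.toNat, ?_⟩
  funext j
  rw [show (∑ i, ((if (i : Fin n).val < n - 1 then (P n v (i.val + 1)).toNat
        else t.toNat : ℕ) : ℤ) • Bcoroot n i)
      = ∑ i, (fun i : Fin n => ((if i.val < n - 1 then (P n v (i.val + 1)).toNat
        else t.toNat : ℕ) : ℤ)) i • Bcoroot n i from rfl,
    sum_coroot_apply n (by omega)]
  simp only
  by_cases h0 : j.val = 0
  · rw [dif_pos h0, if_neg (show ¬ j.val = n - 1 by omega),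
      if_pos (show j.val < n - 1 by omega), one_mul, sub_zero,
      Int.toNat_of_nonneg (hP _ (by omega) (by omega))]
    rw [h0, P_succ n v (show 0 < n by omega), P_zero]
    rw [show (⟨0, show 0 < n by omega⟩ : Fin n) = j from Fin.ext h0.symm]
    ring
  · rw [dif_neg h0]
    by_cases hl : j.val = n - 1
    · rw [if_pos hl, if_neg (show ¬ j.val < n - 1 by omega),
        if_pos (show j.val - 1 < n - 1 by omega),
        Int.toNat_of_nonneg ht0,
        Int.toNat_of_nonneg (hP _ (by omega) (by omega))]
      have h1 : j.val - 1 + 1 = n - 1 := by omega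
      rw [h1]
      have h2 : P n v n = P n v (n - 1) + v ⟨n - 1, by omega⟩ := by
        have := P_succ n v (show n - 1 < n by omega)
        rwa [show n - 1 + 1 = n by omega] at this
      rw [show (⟨n - 1, by omega⟩ : Fin n) = j from Fin.ext hl.symm] at h2
      omega
    · rw [if_neg hl, if_pos (show j.val < n - 1 by omega),
        if_pos (show j.val - 1 < n - 1 by omega), one_mul,
        Int.toNat_of_nonneg (hP _ (by omega) (by omega)),
        Int.toNat_of_nonneg (hP _ (by omega) (by omega))]
      have h1 : j.val - 1 + 1 = j.val := by omega
      rw [h1]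
      have h2 := P_succ n v j.isLt
      rw [show (⟨j.val, j.isLt⟩ : Fin n) = j from Fin.ext rfl] at h2
      omega

end S6

theorem stmt6 (n : ℕ) (hn : 3 ≤ n) (mu : Fin n → ℤ)
    (hdom : Bdominant n mu)
    (hlat : ∃ c : Fin n → ℤ, mu - Bomega n 1 = ∑ i, c i • Bcoroot n i)
    (hge : BdomLE n (Bomega n 1) mu) :
    (¬ BdomLE n (Bomega n 1 + Bomega n 2) mu) ↔
      BdomLE n mu (Bomega n (if n % 2 = 1 then n else n - 1)) := by
  obtain ⟨hanti, hpos⟩ := hdom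
  have hn0 : 0 < n := by omega
  set z : Fin n := ⟨0, hn0⟩ with hz
  have hzval : z.val = 0 := rfl
  set N : ℕ := if n % 2 = 1 then n else n - 1 with hN
  have hN1 : n - 1 ≤ N := by rw [hN]; split <;> omega
  have hN2 : N ≤ n := by rw [hN]; split <;> omega
  have hNodd : N % 2 = 1 := by rw [hN]; split <;> omega
  -- μ₀ ≥ 1
  have hmu0 : 1 ≤ mu z := by
    obtain ⟨c, hc⟩ := hge
    have h := congrFun hc z
    rw [S6.sum_coroot_apply n (by omega)] at h
    rw [dif_pos hzval, if_neg (show ¬ z.val = n - 1 by omega), sub_zero, one_mul] at h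
    simp only [Pi.sub_apply] at h
    have hb : Bomega n 1 z = 1 := by simp [Bomega, hzval]
    rw [hb] at h
    have hc0 : (0 : ℤ) ≤ (c z : ℤ) := Int.natCast_nonneg _
    omega
  -- sum of μ is odd
  have hodd : ∃ t : ℤ, ∑ j, mu j = 2 * t + 1 := by
    obtain ⟨c, hc⟩ := hlat
    have he : Even (∑ j, (mu - Bomega n 1) j) := by
      rw [hc]; exact S6.even_sum_coroot n c
    simp only [Pi.sub_apply] at he
    rw [Finset.sum_sub_distrib] at he
    have h1 : ∑ j, Bomega n 1 j = 1 := by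
      rw [← S6.P_top, S6.P_omega n 1 n le_rfl]
      omega
    rw [h1] at he
    obtain ⟨t, ht⟩ := he
    exact ⟨t, by omega⟩
  obtain ⟨t, hSm⟩ := hodd
  have hP1 : S6.P n mu 1 = mu z := by
    rw [S6.P_succ n mu hn0, S6.P_zero]; simp [hz]
  constructor
  · intro hne
    -- μ₀ ≤ 1
    have hle1 : mu z ≤ 1 := by
      by_contra hgt
      push_neg at hgt
      apply hne
      have key : ∀ k, 2 ≤ k → k ≤ n → 3 ≤ S6.P n mu k := by
        set o : Fin n := ⟨1, by omega⟩ with ho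
        by_cases h1 : 1 ≤ mu o
        · intro k h2k hkn
          have h2 : S6.P n mu 2 = mu z + mu o := by
            rw [show (2 : ℕ) = 1 + 1 from rfl, S6.P_succ n mu (by omega), hP1]
          have hm := S6.P_mono n mu hpos 2 k h2k hkn
          omega
        · intro k h2k hkn
          push_neg at h1
          have h1' : mu o = 0 := le_antisymm (by omega) (hpos o)
          have hz0 : ∀ j : Fin n, 1 ≤ j.val → mu j = 0 := by
            intro j hj
            refine le_antisymm ?_ (hpos j)
            have : mu j ≤ mu o := hanti (by rw [Fin.le_def]; exact hj)
            omega
          have hc1 : S6.P n mu k = mu z := by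
            rw [S6.P_const n mu hz0 k (by omega) hkn, hP1]
          have hcn : S6.P n mu n = mu z := by
            rw [S6.P_const n mu hz0 n (by omega) le_rfl, hP1]
          rw [S6.P_top] at hcn
          omega
      refine S6.exists_coeff n hn _ ?_ ?_ ?_
      · intro k hk1 hk2
        rw [S6.P_sub, S6.P_add, S6.P_omega n 1 k (by omega), S6.P_omega n 2 k (by omega)]
        rcases Nat.eq_or_lt_of_le hk1 with rfl | h2
        · rw [hP1]; omega
        · have := key k (by omega) (by omega)
          omega
      · rw [S6.P_sub, S6.P_add, S6.P_omega n 1 n le_rfl, S6.P_omega n 2 n le_rfl]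
        have := key n (by omega) le_rfl
        omega
      · rw [S6.P_sub, S6.P_add, S6.P_omega n 1 n le_rfl, S6.P_omega n 2 n le_rfl,
          S6.P_top, hSm]
        refine ⟨t - 1, by push_cast; omega⟩
    have hmu1 : mu z = 1 := le_antisymm hle1 hmu0
    have hub1 : ∀ j, mu j ≤ 1 := by
      intro j
      have : mu j ≤ mu z := hanti (by rw [Fin.le_def]; omega)
      omega
    refine S6.exists_coeff n hn _ ?_ ?_ ?_
    · intro k hk1 hk2
      rw [S6.P_sub, S6.P_omega n N k (by omega)]
      have := S6.P_ub n mu hub1 k (by omega)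
      omega
    · rw [S6.P_sub, S6.P_omega n N n le_rfl, S6.P_top, hSm]
      have := S6.P_ub n mu hub1 n le_rfl
      rw [S6.P_top, hSm] at this
      omega
    · rw [S6.P_sub, S6.P_omega n N n le_rfl, S6.P_top, hSm]
      obtain ⟨s, hs⟩ : ∃ s, N = 2 * s + 1 := ⟨N / 2, by omega⟩
      refine ⟨(s : ℤ) - t, ?_⟩
      rw [show min n N = N by omega, hs]
      push_cast
      ring
  · rintro ⟨c, hc⟩ ⟨d, hd⟩
    have h1 := congrFun hc z
    have h2 := congrFun hd z
    rw [S6.sum_coroot_apply n (by omega)] at h1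
    rw [S6.sum_coroot_apply n (by omega)] at h2
    rw [dif_pos hzval, if_neg (show ¬ z.val = n - 1 by omega), sub_zero, one_mul] at h1 h2
    simp only [Pi.sub_apply, Pi.add_apply] at h1 h2
    have hb1 : Bomega n N z = 1 := by
      simp only [Bomega]; rw [if_pos (show z.val < N by omega)]
    have hb2 : Bomega n 1 z = 1 := by
      simp only [Bomega]; rw [if_pos (show z.val < 1 by omega)]
    have hb3 : Bomega n 2 z = 1 := by
      simp only [Bomega]; rw [if_pos (show z.val < 2 by omega)]
    rw [hb1] at h1
    rw [hb2, hb3] at h2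
    have hc0 : (0 : ℤ) ≤ (c z : ℤ) := Int.natCast_nonneg _
    have hd0 : (0 : ℤ) ≤ (d z : ℤ) := Int.natCast_nonneg _
    omega
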